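/- Let Q(z) = Σ_{i=-(N-1)}^{N-1} q_i z^i be a Laurent polynomial of degree N−1 with complex coefficients. Then Q(z) is real and nonnegative for every complex z with |z| = 1 if and only if there exists an N×N Hermitian positive semidefinite complex matrix M such that q_i = Tr_i M for every i with −(N−1) ≤ i ≤ N−1, where Tr_i M denotes the trace of M along its i-th superdiagonal (for i ≥ 0, Tr_i M = Σ_{ℓ=1}^{N−i} M_{ℓ, ℓ+i}; for i < 0, Tr_i M = Σ_{ℓ=1}^{N+i} M_{ℓ−i, ℓ}). -/

import Mathlib

open scoped ComplexOrder

/-- The trace of an `N × N` matrix along its `i`-th superdiagonal (for `i < 0`, along its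
`(-i)`-th subdiagonal): `Tr_i M = ∑_{ℓ=1}^{N-i} M_{ℓ, ℓ+i}` for `i ≥ 0`, and
`Tr_i M = ∑_{ℓ=1}^{N+i} M_{ℓ-i, ℓ}` for `i < 0`. -/
noncomputable def diagTrace {N : ℕ} (M : Matrix (Fin N) (Fin N) ℂ) (i : ℤ) : ℂ :=
  ∑ a : Fin N, ∑ b : Fin N, if (b : ℤ) - (a : ℤ) = i then M a b else 0

open Polynomial

lemma circle_infinite : Set.Infinite {z : ℂ | ‖z‖ = 1} := by
  have h1 : ∀ n : ℕ, (1 / (n + 1) : ℝ) ∈ Set.Icc 0 Real.pi := by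
    intro n
    constructor
    · positivity
    · have : (1 / (n + 1) : ℝ) ≤ 1 := by
        rw [div_le_one (by positivity)]; linarith [Nat.cast_nonneg (α := ℝ) n]
      linarith [Real.pi_gt_three]
  apply Set.infinite_of_injective_forall_mem
    (f := fun n : ℕ => Complex.exp (Complex.ofReal (1 / (n + 1)) * Complex.I))
  · intro a b hab
    have hre : Real.cos (1 / (a + 1)) = Real.cos (1 / (b + 1)) := by
      have := congrArg Complex.re hab
      rwa [Complex.exp_ofReal_mul_I_re, Complex.exp_ofReal_mul_I_re] at this
    have h2 := Real.injOn_cos (h1 a) (h1 b) hre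
    field_simp at h2
    exact_mod_cast (by linarith : (a : ℝ) = b)
  · intro n
    exact Complex.norm_exp_ofReal_mul_I _

lemma poly_eq_zero_of_circle (A : Polynomial ℂ) (h : ∀ z : ℂ, ‖z‖ = 1 → A.eval z = 0) :
    A = 0 :=
  A.eq_zero_of_infinite_isRoot (circle_infinite.mono fun z hz => h z hz)

lemma eval_reflect {m : ℕ} (R : Polynomial ℂ) (hR : R.natDegree ≤ m) {u : ℂ} (hu : u ≠ 0) :
    (Polynomial.reflect m R).eval u = u ^ m * R.eval u⁻¹ := by
  have : Invertible (u⁻¹) := invertibleOfNonzero (inv_ne_zero hu)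
  have h := Polynomial.eval₂_reflect_mul_pow (RingHom.id ℂ) (u⁻¹) m R hR
  rw [invOf_eq_inv, inv_inv] at h
  have h' : (Polynomial.reflect m R).eval u * u⁻¹ ^ m = R.eval u⁻¹ := h
  have hpow : (u : ℂ) ^ m ≠ 0 := pow_ne_zero _ hu
  rw [← h']
  field_simp
  rw [mul_assoc, ← mul_pow, mul_one_div, div_self hu, one_pow, mul_one]
noncomputable def sumPoly (n : ℕ) (c : ℤ → ℂ) : Polynomial ℂ :=
  ∑ i ∈ Finset.Icc (-(n : ℤ)) n, C (c i) * X ^ (i + n).toNat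

lemma natDegree_sumPoly (n : ℕ) (c : ℤ → ℂ) : (sumPoly n c).natDegree ≤ 2 * n := by
  apply Polynomial.natDegree_sum_le_of_forall_le
  intro i hi
  refine (Polynomial.natDegree_C_mul_X_pow_le _ _).trans ?_
  simp only [Finset.mem_Icc] at hi
  omega

lemma eval_sumPoly (n : ℕ) (c : ℤ → ℂ) {z : ℂ} (hz : ‖z‖ = 1) :
    (sumPoly n c).eval z = z ^ n * ∑ i ∈ Finset.Icc (-(n : ℤ)) n, c i * z ^ i := by
  have hz0 : z ≠ 0 := by
    intro h; rw [h] at hz; simp at hz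
  rw [sumPoly, Polynomial.eval_finset_sum, Finset.mul_sum]
  refine Finset.sum_congr rfl fun i hi => ?_
  simp only [Finset.mem_Icc] at hi
  have h1 : (z : ℂ) ^ (i + n).toNat = z ^ (i + (n : ℤ)) := by
    rw [← zpow_natCast, Int.toNat_of_nonneg (by omega)]
  rw [Polynomial.eval_mul, Polynomial.eval_C, Polynomial.eval_pow, Polynomial.eval_X, h1,
    zpow_add₀ hz0, zpow_natCast]
  ring

lemma coeff_sumPoly (n : ℕ) (c : ℤ → ℂ) {i : ℤ} (hi : i ∈ Finset.Icc (-(n : ℤ)) n) :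
    (sumPoly n c).coeff (i + n).toNat = c i := by
  simp only [Finset.mem_Icc] at hi
  rw [sumPoly, Polynomial.finset_sum_coeff]
  rw [Finset.sum_eq_single i]
  · simp
  · intro j hj hji
    simp only [Finset.mem_Icc] at hj
    rw [Polynomial.coeff_C_mul, Polynomial.coeff_X_pow, if_neg (by omega), mul_zero]
  · intro h
    exact absurd (Finset.mem_Icc.mpr (by omega)) h

lemma coeff_ext (n : ℕ) (c : ℤ → ℂ)
    (h : ∀ z : ℂ, ‖z‖ = 1 → ∑ i ∈ Finset.Icc (-(n : ℤ)) n, c i * z ^ i = 0) :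
    ∀ i ∈ Finset.Icc (-(n : ℤ)) n, c i = 0 := by
  intro i hi
  have hA : sumPoly n c = 0 := by
    apply poly_eq_zero_of_circle
    intro z hz
    rw [eval_sumPoly n c hz, h z hz, mul_zero]
  rw [← coeff_sumPoly n c hi, hA, Polynomial.coeff_zero]

lemma eval_map_conj (A : Polynomial ℂ) (u : ℂ) :
    (A.map (starRingEnd ℂ)).eval u = (starRingEnd ℂ) (A.eval ((starRingEnd ℂ) u)) := by
  conv_lhs => rw [show u = (starRingEnd ℂ) ((starRingEnd ℂ) u) by simp]
  rw [Polynomial.eval_map, Polynomial.eval₂_at_apply]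

lemma fejer_riesz : ∀ n : ℕ, ∀ R : Polynomial ℂ, R.natDegree ≤ 2 * n →
    (∀ z : ℂ, ‖z‖ = 1 → 0 < (starRingEnd ℂ) z ^ n * R.eval z) →
    ∃ P : Polynomial ℂ, P.natDegree ≤ n ∧
      ∀ z : ℂ, ‖z‖ = 1 →
        (starRingEnd ℂ) z ^ n * R.eval z = P.eval z * (starRingEnd ℂ) (P.eval z) := by
  intro n
  induction n with
  | zero =>
    intro R hdeg h
    have hRC : R = C (R.coeff 0) := Polynomial.eq_C_of_natDegree_le_zero (by omega)
    have h1 := h 1 (by simp)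
    simp only [map_one, one_pow, one_mul] at h1
    rw [hRC, Polynomial.eval_C] at h1
    have him : (R.coeff 0).im = 0 := ((Complex.lt_def.mp h1).2).symm
    have hre : 0 < (R.coeff 0).re := by simpa using (Complex.lt_def.mp h1).1
    refine ⟨C ((Real.sqrt (R.coeff 0).re : ℝ) : ℂ), by simp, fun z hz => ?_⟩
    have hev : R.eval z = R.coeff 0 := by conv_lhs => rw [hRC, Polynomial.eval_C]
    simp only [Polynomial.eval_C, pow_zero, one_mul, Complex.conj_ofReal, hev,
      ← Complex.ofReal_mul, Real.mul_self_sqrt hre.le]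
    exact Complex.ext (by simp) (by simp [him])
  | succ n IH =>
    intro R hdeg h
    have hR0 : R ≠ 0 := by
      rintro rfl
      have := h 1 (by simp)
      simp at this
    -- basic circle facts
    have hz0 : ∀ z : ℂ, ‖z‖ = 1 → z ≠ 0 := by
      intro z hz h0; rw [h0] at hz; simp at hz
    have hzc : ∀ z : ℂ, ‖z‖ = 1 → z * (starRingEnd ℂ) z = 1 := by
      intro z hz
      rw [Complex.mul_conj, Complex.normSq_eq_norm_sq, hz]
      norm_num
    have hcinv : ∀ z : ℂ, ‖z‖ = 1 → ((starRingEnd ℂ) z)⁻¹ = z := by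
      intro z hz
      rw [← Complex.inv_eq_conj hz, inv_inv]
    -- realness of the values on the circle
    have hreal : ∀ z : ℂ, ‖z‖ = 1 →
        z ^ (n + 1) * (starRingEnd ℂ) (R.eval z) = (starRingEnd ℂ) z ^ (n + 1) * R.eval z := by
      intro z hz
      have hu := h z hz
      have him : ((starRingEnd ℂ) z ^ (n + 1) * R.eval z).im = 0 := ((Complex.lt_def.mp hu).2).symm
      have := Complex.conj_eq_iff_im.mpr him
      calc z ^ (n + 1) * (starRingEnd ℂ) (R.eval z)
          = (starRingEnd ℂ) ((starRingEnd ℂ) z ^ (n + 1) * R.eval z) := by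
            rw [map_mul, map_pow, Complex.conj_conj]
        _ = (starRingEnd ℂ) z ^ (n + 1) * R.eval z := this
    -- the symmetry B = R
    set B : Polynomial ℂ := (Polynomial.reflect (2 * (n + 1)) R).map (starRingEnd ℂ) with hBdef
    have hBR : B = R := by
      have : B - R = 0 := by
        apply poly_eq_zero_of_circle
        intro z hz
        rw [Polynomial.eval_sub, sub_eq_zero]
        rw [eval_map_conj, eval_reflect R hdeg (by
          simpa using hz0 z hz), hcinv z hz, map_mul, map_pow, Complex.conj_conj]
        calc z ^ (2 * (n + 1)) * (starRingEnd ℂ) (R.eval z)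
            = z ^ (n + 1) * (z ^ (n + 1) * (starRingEnd ℂ) (R.eval z)) := by ring
          _ = z ^ (n + 1) * ((starRingEnd ℂ) z ^ (n + 1) * R.eval z) := by rw [hreal z hz]
          _ = (z * (starRingEnd ℂ) z) ^ (n + 1) * R.eval z := by ring
          _ = R.eval z := by rw [hzc z hz]; ring
      exact sub_eq_zero.mp this
    -- coefficient symmetry at the ends
    have hcoeff0 : R.coeff 0 = (starRingEnd ℂ) (R.coeff (2 * (n + 1))) := by
      conv_lhs => rw [← hBR]
      rw [hBdef, Polynomial.coeff_map, Polynomial.coeff_reflect,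
        Polynomial.revAt_le (by omega), Nat.sub_zero]
    by_cases hc : R.coeff (2 * n + 2) = 0
    · -- degenerate case: divide by X
      have hc0 : R.coeff 0 = 0 := by
        rw [hcoeff0, show 2 * (n + 1) = 2 * n + 2 by ring, hc, map_zero]
      obtain ⟨R₁, hR₁⟩ : (X : Polynomial ℂ) ∣ R := Polynomial.X_dvd_iff.mpr hc0
      have hR₁0 : R₁ ≠ 0 := by rintro rfl; simp at hR₁; exact hR0 hR₁
      have hdegR : R.natDegree ≤ 2 * n + 1 := by
        rcases Nat.lt_or_ge R.natDegree (2 * n + 2) with hlt | hge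
        · omega
        · exfalso
          have h5 : R.natDegree = 2 * n + 2 := by omega
          have h6 := Polynomial.leadingCoeff_ne_zero.mpr hR0
          rw [Polynomial.leadingCoeff, h5] at h6
          exact h6 hc
      have hdegR₁ : R₁.natDegree ≤ 2 * n := by
        have := Polynomial.natDegree_mul (Polynomial.X_ne_zero (R := ℂ)) hR₁0
        rw [← hR₁, Polynomial.natDegree_X] at this
        omega
      have hpos₁ : ∀ z : ℂ, ‖z‖ = 1 → 0 < (starRingEnd ℂ) z ^ n * R₁.eval z := by
        intro z hz
        have h2 := h z hz
        rw [hR₁] at h2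
        have : (starRingEnd ℂ) z ^ (n + 1) * (X * R₁ : Polynomial ℂ).eval z
            = (starRingEnd ℂ) z ^ n * R₁.eval z := by
          rw [Polynomial.eval_mul, Polynomial.eval_X, pow_succ]
          have := hzc z hz
          calc (starRingEnd ℂ) z ^ n * (starRingEnd ℂ) z * (z * R₁.eval z)
              = (z * (starRingEnd ℂ) z) * ((starRingEnd ℂ) z ^ n * R₁.eval z) := by ring
            _ = (starRingEnd ℂ) z ^ n * R₁.eval z := by rw [this]; ring
        rwa [this] at h2
      obtain ⟨P, hPdeg, hPev⟩ := IH R₁ hdegR₁ hpos₁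
      refine ⟨P, hPdeg.trans (by omega), fun z hz => ?_⟩
      rw [← hPev z hz, hR₁, Polynomial.eval_mul, Polynomial.eval_X, pow_succ]
      have := hzc z hz
      calc (starRingEnd ℂ) z ^ n * (starRingEnd ℂ) z * (z * R₁.eval z)
          = (z * (starRingEnd ℂ) z) * ((starRingEnd ℂ) z ^ n * R₁.eval z) := by ring
        _ = (starRingEnd ℂ) z ^ n * R₁.eval z := by rw [this]; ring
    · -- main case: split off a root pair
      have hdegR : R.natDegree = 2 * n + 2 :=
        le_antisymm (by omega) (Polynomial.le_natDegree_of_ne_zero hc)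
      have hdegne : R.degree ≠ 0 := by
        rw [Polynomial.degree_eq_natDegree hR0, hdegR]
        exact_mod_cast (by omega : (2 * n + 2 : ℕ) ≠ 0)
      obtain ⟨w, hw⟩ := IsAlgClosed.exists_root R hdegne
      have hcne : R.coeff 0 ≠ 0 := by
        rw [hcoeff0, show 2 * (n + 1) = 2 * n + 2 by ring]
        simpa using hc
      have hw0 : w ≠ 0 := by
        rintro rfl
        rw [Polynomial.IsRoot, ← Polynomial.coeff_zero_eq_eval_zero] at hw
        exact hcne hw
      have hwabs : ‖w‖ ≠ 1 := by
        intro habs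
        have h2 := h w habs
        rw [hw.eq_zero, mul_zero] at h2
        exact lt_irrefl _ h2
      set v : ℂ := ((starRingEnd ℂ) w)⁻¹ with hvdef
      have hcw0 : (starRingEnd ℂ) w ≠ 0 := star_ne_zero.mpr hw0
      have hv0 : v ≠ 0 := inv_ne_zero hcw0
      have hvw : v ≠ w := by
        intro hvw
        apply hwabs
        have h1 : w * (starRingEnd ℂ) w = 1 := by
          nth_rewrite 1 [← hvw]
          exact inv_mul_cancel₀ hcw0
        rw [Complex.mul_conj] at h1
        have h2 : Complex.normSq w = 1 := by exact_mod_cast h1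
        rw [Complex.norm_def, h2, Real.sqrt_one]
      have hRv : R.eval v = 0 := by
        have h1 : (starRingEnd ℂ) v = w⁻¹ := by rw [hvdef, map_inv₀, Complex.conj_conj]
        have h2 : (Polynomial.reflect (2 * (n + 1)) R).eval w⁻¹
            = (w⁻¹) ^ (2 * (n + 1)) * R.eval w := by
          rw [eval_reflect R hdeg (inv_ne_zero hw0), inv_inv]
        calc R.eval v = B.eval v := by rw [hBR]
          _ = (starRingEnd ℂ) ((Polynomial.reflect (2 * (n + 1)) R).eval ((starRingEnd ℂ) v)) :=
              eval_map_conj _ _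
          _ = 0 := by rw [h1, h2, hw.eq_zero, mul_zero, map_zero]
      obtain ⟨R', hR'⟩ := Polynomial.dvd_iff_isRoot.mpr hw
      have hR'v : R'.eval v = 0 := by
        have h3 := hRv
        rw [hR', Polynomial.eval_mul, Polynomial.eval_sub, Polynomial.eval_X,
          Polynomial.eval_C] at h3
        exact (mul_eq_zero.mp h3).resolve_left (sub_ne_zero.mpr hvw)
      obtain ⟨R₂, hR₂⟩ := Polynomial.dvd_iff_isRoot.mpr hR'v
      have hRfact : R = (X - C w) * ((X - C v) * R₂) := by rw [hR', hR₂]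
      have hR₂0 : R₂ ≠ 0 := by
        rintro rfl
        rw [mul_zero, mul_zero] at hRfact
        exact hR0 hRfact
      have hdeg₂ : R₂.natDegree ≤ 2 * n := by
        have hne : (X - C v) * R₂ ≠ 0 := mul_ne_zero (Polynomial.X_sub_C_ne_zero v) hR₂0
        have e1 := Polynomial.natDegree_mul (Polynomial.X_sub_C_ne_zero w) hne
        have e2 := Polynomial.natDegree_mul (Polynomial.X_sub_C_ne_zero v) hR₂0
        rw [← hRfact, Polynomial.natDegree_X_sub_C] at e1
        rw [Polynomial.natDegree_X_sub_C] at e2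
        omega
      set R₃ : Polynomial ℂ := C (-v) * R₂ with hR₃def
      have hdeg₃ : R₃.natDegree ≤ 2 * n := (Polynomial.natDegree_C_mul_le _ _).trans hdeg₂
      have hkey : ∀ z : ℂ, ‖z‖ = 1 →
          (starRingEnd ℂ) z ^ (n + 1) * R.eval z
            = ((z - w) * (starRingEnd ℂ) (z - w)) * ((starRingEnd ℂ) z ^ n * R₃.eval z) := by
        intro z hz
        have h1 := hzc z hz
        have h2 : v * (starRingEnd ℂ) w = 1 := inv_mul_cancel₀ hcw0
        rw [hRfact, hR₃def]
        simp only [Polynomial.eval_mul, Polynomial.eval_sub, Polynomial.eval_X,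
          Polynomial.eval_C, Polynomial.eval_neg, map_sub]
        linear_combination ((starRingEnd ℂ) z ^ n * (z - w) * R₂.eval z) * (h1 - h2)
      have hpos₃ : ∀ z : ℂ, ‖z‖ = 1 → 0 < (starRingEnd ℂ) z ^ n * R₃.eval z := by
        intro z hz
        have hzw : z ≠ w := by rintro rfl; exact hwabs hz
        have hns : 0 < Complex.normSq (z - w) := Complex.normSq_pos.mpr (sub_ne_zero.mpr hzw)
        have h2 := h z hz
        rw [hkey z hz, Complex.mul_conj] at h2
        have h3 := mul_pos (Complex.zero_lt_real.mpr (inv_pos.mpr hns)) h2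
        rwa [← mul_assoc, ← Complex.ofReal_mul, inv_mul_cancel₀ hns.ne', Complex.ofReal_one,
          one_mul] at h3
      obtain ⟨P₃, hP₃deg, hP₃⟩ := IH R₃ hdeg₃ hpos₃
      refine ⟨(X - C w) * P₃, ?_, fun z hz => ?_⟩
      · exact Polynomial.natDegree_mul_le.trans
          (by rw [Polynomial.natDegree_X_sub_C]; omega)
      · rw [hkey z hz, hP₃ z hz]
        simp only [Polynomial.eval_mul, Polynomial.eval_sub, Polynomial.eval_X,
          Polynomial.eval_C, map_mul, map_sub]
        ring

lemma zpow_sub_circle {z : ℂ} (hz : ‖z‖ = 1) (a b : ℕ) :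
    z ^ ((b : ℤ) - (a : ℤ)) = z ^ b * (starRingEnd ℂ) z ^ a := by
  have hz0 : z ≠ 0 := by intro h; rw [h] at hz; simp at hz
  rw [zpow_sub₀ hz0, zpow_natCast, zpow_natCast, div_eq_mul_inv, ← Complex.inv_eq_conj hz,
    inv_pow]

lemma sum_ite_diag {m : ℕ} (f : Fin (m + 1) → Fin (m + 1) → ℂ) (g : ℤ → ℂ) :
    ∑ i ∈ Finset.Icc (-(m : ℤ)) m,
        (∑ a : Fin (m + 1), ∑ b : Fin (m + 1), if (b : ℤ) - (a : ℤ) = i then f a b else 0) * g i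
      = ∑ a : Fin (m + 1), ∑ b : Fin (m + 1), f a b * g ((b : ℤ) - (a : ℤ)) := by
  simp only [Finset.sum_mul]
  rw [Finset.sum_comm]
  refine Finset.sum_congr rfl fun a _ => ?_
  rw [Finset.sum_comm]
  refine Finset.sum_congr rfl fun b _ => ?_
  simp only [ite_mul, zero_mul]
  rw [Finset.sum_ite_eq (Finset.Icc (-(m : ℤ)) m) ((b : ℤ) - (a : ℤ)) (fun i => f a b * g i)]
  rw [if_pos]
  rw [Finset.mem_Icc]
  have ha := a.isLt
  have hb := b.isLt
  omega


/-- A Laurent polynomial `Q(z) = ∑_{i=-(N-1)}^{N-1} q_i z^i` of degree `N-1` is real and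
nonnegative on the unit circle iff there is an `N × N` Hermitian positive semidefinite matrix
`M` with `q_i = Tr_i M` for all `-(N-1) ≤ i ≤ N-1`. -/
theorem laurent_nonneg_iff_psd_gram (N : ℕ) (hN : 0 < N) (q : ℤ → ℂ) :
    (∀ z : ℂ, ‖z‖ = 1 →
      ∃ r : ℝ, 0 ≤ r ∧
        (∑ i ∈ Finset.Icc (-((N : ℤ) - 1)) ((N : ℤ) - 1), q i * z ^ i) = (r : ℂ)) ↔
    (∃ M : Matrix (Fin N) (Fin N) ℂ, M.IsHermitian ∧ M.PosSemidef ∧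
      ∀ i : ℤ, -((N : ℤ) - 1) ≤ i → i ≤ (N : ℤ) - 1 → q i = diagTrace M i) := by
  obtain ⟨n, rfl⟩ := Nat.exists_eq_succ_of_ne_zero hN.ne'
  have hcast : ((n + 1 : ℕ) : ℤ) - 1 = (n : ℤ) := by push_cast; ring
  simp only [hcast]
  have hz0 : ∀ z : ℂ, ‖z‖ = 1 → z ≠ 0 := by
    intro z hz h0; rw [h0] at hz; simp at hz
  have hzc : ∀ z : ℂ, ‖z‖ = 1 → z * (starRingEnd ℂ) z = 1 := by
    intro z hz
    rw [Complex.mul_conj, Complex.normSq_eq_norm_sq, hz]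
    norm_num
  constructor
  · -- hard direction
    intro h
    have hstep : ∀ k : ℕ, ∃ p : Fin (n + 1) → ℂ,
        ∀ i ∈ Finset.Icc (-(n : ℤ)) (n : ℤ),
          q i + (if i = 0 then (((1 : ℝ) / (k + 1) : ℝ) : ℂ) else 0)
            = ∑ a : Fin (n + 1), ∑ b : Fin (n + 1),
                if (b : ℤ) - (a : ℤ) = i then (starRingEnd ℂ) (p a) * p b else 0 := by
      intro k
      set ε : ℝ := (1 : ℝ) / (k + 1) with hεdef
      have hε : 0 < ε := by positivity
      set qk : ℤ → ℂ := fun i => q i + (if i = 0 then (ε : ℂ) else 0) with hqk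
      have hQk : ∀ z : ℂ, ‖z‖ = 1 →
          (starRingEnd ℂ) z ^ n * (sumPoly n qk).eval z
            = ∑ i ∈ Finset.Icc (-(n : ℤ)) n, qk i * z ^ i := by
        intro z hz
        rw [eval_sumPoly n qk hz, ← mul_assoc]
        have h1 : (starRingEnd ℂ) z ^ n * z ^ n = 1 := by
          rw [← mul_pow, mul_comm, hzc z hz, one_pow]
        rw [h1, one_mul]
      have hpos : ∀ z : ℂ, ‖z‖ = 1 →
          0 < (starRingEnd ℂ) z ^ n * (sumPoly n qk).eval z := by
        intro z hz
        obtain ⟨r, hr0, hr⟩ := h z hz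
        rw [hQk z hz]
        have hsplit : ∑ i ∈ Finset.Icc (-(n : ℤ)) n, qk i * z ^ i
            = (∑ i ∈ Finset.Icc (-(n : ℤ)) n, q i * z ^ i) + (ε : ℂ) := by
          simp only [hqk, add_mul, ite_mul, zero_mul, Finset.sum_add_distrib]
          congr 1
          rw [Finset.sum_ite_eq' (Finset.Icc (-(n : ℤ)) n) 0 (fun i => (ε : ℂ) * z ^ i),
            if_pos (by rw [Finset.mem_Icc]; omega)]
          simp
        rw [hsplit, hr, ← Complex.ofReal_add]
        exact Complex.zero_lt_real.mpr (by positivity)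
      obtain ⟨P, hPdeg, hPev⟩ := fejer_riesz n (sumPoly n qk) (natDegree_sumPoly n qk) hpos
      refine ⟨fun a => P.coeff a, ?_⟩
      have hext := coeff_ext n (fun i => qk i - ∑ a : Fin (n + 1), ∑ b : Fin (n + 1),
          if (b : ℤ) - (a : ℤ) = i then (starRingEnd ℂ) (P.coeff a) * P.coeff b else 0) ?_
      · intro i hi
        exact sub_eq_zero.mp (hext i hi)
      · intro z hz
        simp only [sub_mul, Finset.sum_sub_distrib]
        rw [sub_eq_zero]
        have hPz : P.eval z = ∑ a : Fin (n + 1), P.coeff a * z ^ (a : ℕ) := by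
          rw [Polynomial.eval_eq_sum_range' (Nat.lt_succ_of_le hPdeg),
            ← Fin.sum_univ_eq_sum_range (fun j => P.coeff j * z ^ j)]
        calc ∑ i ∈ Finset.Icc (-(n : ℤ)) n, qk i * z ^ i
            = (starRingEnd ℂ) z ^ n * (sumPoly n qk).eval z := (hQk z hz).symm
          _ = P.eval z * (starRingEnd ℂ) (P.eval z) := hPev z hz
          _ = ∑ i ∈ Finset.Icc (-(n : ℤ)) n, (∑ a : Fin (n + 1), ∑ b : Fin (n + 1),
                if (b : ℤ) - (a : ℤ) = i then (starRingEnd ℂ) (P.coeff a) * P.coeff b else 0)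
                  * z ^ i := by
              rw [sum_ite_diag (fun a b => (starRingEnd ℂ) (P.coeff a) * P.coeff b)
                (fun i => z ^ i)]
              rw [hPz, map_sum, Finset.sum_mul_sum]
              rw [Finset.sum_comm]
              refine Finset.sum_congr rfl fun a _ => Finset.sum_congr rfl fun b _ => ?_
              rw [zpow_sub_circle hz]
              simp only [map_mul, map_pow]
              ring
    choose ps hps using hstep
    have hq0 : ∀ k : ℕ, (q 0).re + (1 : ℝ) / (k + 1)
        = ∑ a : Fin (n + 1), Complex.normSq (ps k a) := by
      intro k
      have h1 := hps k 0 (by rw [Finset.mem_Icc]; omega)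
      rw [if_pos rfl] at h1
      have hdiag : ∀ a : Fin (n + 1),
          (∑ b : Fin (n + 1), if (b : ℤ) - (a : ℤ) = 0 then
              (starRingEnd ℂ) (ps k a) * ps k b else 0)
            = ((Complex.normSq (ps k a) : ℝ) : ℂ) := by
        intro a
        rw [Finset.sum_eq_single a]
        · rw [if_pos (sub_self _), mul_comm, Complex.mul_conj]
        · intro b _ hb
          rw [if_neg]
          intro hc
          exact hb (Fin.ext (by omega))
        · intro hh; exact absurd (Finset.mem_univ a) hh
      rw [Finset.sum_congr rfl (fun a _ => hdiag a)] at h1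
      have h2 := congrArg Complex.re h1
      simp only [Complex.add_re, Complex.ofReal_re, Complex.re_sum] at h2
      exact h2
    have hbounds : ∀ k : ℕ, ps k ∈ Metric.closedBall (0 : Fin (n + 1) → ℂ)
        (Real.sqrt ((q 0).re + 1)) := by
      intro k
      rw [mem_closedBall_zero_iff, pi_norm_le_iff_of_nonneg (Real.sqrt_nonneg _)]
      intro a
      rw [Complex.norm_def]
      apply Real.sqrt_le_sqrt
      have h1 : Complex.normSq (ps k a) ≤ (q 0).re + (1 : ℝ) / (k + 1) := by
        rw [hq0 k]
        exact Finset.single_le_sum (f := fun a => Complex.normSq (ps k a))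
          (fun i _ => Complex.normSq_nonneg _) (Finset.mem_univ a)
      have h2 : (1 : ℝ) / (k + 1) ≤ 1 := by
        rw [div_le_one (by positivity)]
        linarith [Nat.cast_nonneg (α := ℝ) k]
      linarith
    obtain ⟨p, hpmem, φ, hφ, htend⟩ :=
      (isCompact_closedBall (0 : Fin (n + 1) → ℂ) (Real.sqrt ((q 0).re + 1))).tendsto_subseq
        hbounds
    have hherm : (Matrix.of fun a b => (starRingEnd ℂ) (p a) * p b :
        Matrix (Fin (n + 1)) (Fin (n + 1)) ℂ).IsHermitian := by
      ext a b
      simp only [Matrix.conjTranspose_apply, Matrix.of_apply, star_mul', map_mul,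
        Complex.conj_conj, RCLike.star_def]
      ring
    refine ⟨Matrix.of fun a b => (starRingEnd ℂ) (p a) * p b, hherm, Matrix.posSemidef_iff_dotProduct_mulVec.mpr ⟨hherm, ?_⟩, ?_⟩
    · intro x
      have hdp : dotProduct (star x)
          (Matrix.mulVec (Matrix.of fun a b => (starRingEnd ℂ) (p a) * p b) x)
            = (starRingEnd ℂ) (∑ a, p a * x a) * (∑ a, p a * x a) := by
        simp only [dotProduct, Matrix.mulVec, Pi.star_apply, RCLike.star_def,
          Matrix.of_apply, Finset.mul_sum, map_sum, map_mul, Finset.sum_mul]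
        rw [Finset.sum_comm]
        refine Finset.sum_congr rfl fun a _ => Finset.sum_congr rfl fun b _ => ?_
        ring
      rw [hdp, starRingEnd_apply]
      exact star_mul_self_nonneg (∑ a, p a * x a)
    · intro i hi1 hi2
      have hiIcc : i ∈ Finset.Icc (-(n : ℤ)) (n : ℤ) := Finset.mem_Icc.mpr ⟨hi1, hi2⟩
      have hLHS : Filter.Tendsto
          (fun k => q i + (if i = 0 then (((1 : ℝ) / (φ k + 1) : ℝ) : ℂ) else 0))
          Filter.atTop (nhds (q i)) := by
        have h0 : Filter.Tendsto (fun k : ℕ => (((1 : ℝ) / (φ k + 1) : ℝ) : ℂ))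
            Filter.atTop (nhds 0) := by
          rw [show ((0 : ℂ)) = ((0 : ℝ) : ℂ) by simp]
          exact (Complex.continuous_ofReal.tendsto 0).comp
            (tendsto_one_div_add_atTop_nhds_zero_nat.comp hφ.tendsto_atTop)
        by_cases hi0 : i = 0
        · simpa [hi0] using tendsto_const_nhds.add h0
        · simpa [hi0] using (tendsto_const_nhds :
            Filter.Tendsto (fun _ : ℕ => q i) Filter.atTop (nhds (q i)))
      have hRHS : Filter.Tendsto (fun k => ∑ a : Fin (n + 1), ∑ b : Fin (n + 1),
          if (b : ℤ) - (a : ℤ) = i then (starRingEnd ℂ) (ps (φ k) a) * ps (φ k) b else 0)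
          Filter.atTop
          (nhds (diagTrace (Matrix.of fun a b => (starRingEnd ℂ) (p a) * p b) i)) := by
        simp only [diagTrace, Matrix.of_apply]
        refine tendsto_finset_sum _ fun a _ => tendsto_finset_sum _ fun b _ => ?_
        by_cases hab : (b : ℤ) - (a : ℤ) = i
        · simp only [if_pos hab]
          have hta := tendsto_pi_nhds.mp htend a
          have htb := tendsto_pi_nhds.mp htend b
          exact ((Complex.continuous_conj.tendsto (p a)).comp hta).mul htb
        · simp only [if_neg hab]
          exact tendsto_const_nhds
      have heq : (fun k => q i + (if i = 0 then (((1 : ℝ) / (φ k + 1) : ℝ) : ℂ) else 0))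
          = fun k => ∑ a : Fin (n + 1), ∑ b : Fin (n + 1),
              if (b : ℤ) - (a : ℤ) = i then (starRingEnd ℂ) (ps (φ k) a) * ps (φ k) b else 0 :=
        funext fun k => hps (φ k) i hiIcc
      rw [heq] at hLHS
      exact tendsto_nhds_unique hLHS hRHS
  · -- easy direction
    rintro ⟨M, hM, hPSD, hq⟩ z hz
    have key : (∑ i ∈ Finset.Icc (-(n : ℤ)) n, q i * z ^ i)
        = dotProduct (star fun a : Fin (n + 1) => z ^ (a : ℕ))
            (Matrix.mulVec M fun a : Fin (n + 1) => z ^ (a : ℕ)) := by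
      rw [Finset.sum_congr rfl (fun i hi => by
        rw [Finset.mem_Icc] at hi
        rw [hq i hi.1 hi.2] :
          ∀ i ∈ Finset.Icc (-(n : ℤ)) n, q i * z ^ i = diagTrace M i * z ^ i)]
      simp only [diagTrace]
      rw [sum_ite_diag M (fun i => z ^ i)]
      simp only [dotProduct, Matrix.mulVec, Pi.star_apply, RCLike.star_def,
        Finset.mul_sum, map_pow]
      refine Finset.sum_congr rfl fun a _ => Finset.sum_congr rfl fun b _ => ?_
      rw [zpow_sub_circle hz]
      ring
    have hle := (Matrix.posSemidef_iff_dotProduct_mulVec.mp hPSD).2 (fun a : Fin (n + 1) => z ^ (a : ℕ))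
    rw [key]
    have h1 := (Complex.le_def.mp hle).1
    have h2 := (Complex.le_def.mp hle).2
    refine ⟨_, by simpa using h1, ?_⟩
    exact (Complex.ext (by simp) (by simpa using h2)).symm
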